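/- Let (M,g) be a complete Riemannian manifold and X a C¹ vector field on M such that ∫_M |X| dv_g < ∞ and ∫_M |div(X)| dv_g < ∞. Then ∫_M div(X) dv_g = 0. -/

import Mathlib

open MeasureTheory Metric Filter

section GaffneyAux

variable {n : ℕ}

private lemma gaffney_trace_aux (f : EuclideanSpace ℝ (Fin n) →L[ℝ] EuclideanSpace ℝ (Fin n)) :
    LinearMap.trace ℝ _ f.toLinearMap = ∑ i, f (EuclideanSpace.single i 1) i := by
  rw [LinearMap.trace_eq_matrix_trace ℝ (EuclideanSpace.basisFun (Fin n) ℝ).toBasis]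
  rw [Matrix.trace]
  simp [Matrix.diag, LinearMap.toMatrix_apply, EuclideanSpace.basisFun_repr]

private lemma gaffney_abs_coord_le (x : EuclideanSpace ℝ (Fin n)) (i : Fin n) : |x i| ≤ ‖x‖ := by
  rw [EuclideanSpace.norm_eq]
  have h : |x i| = Real.sqrt (‖x i‖ ^ 2) := by rw [Real.sqrt_sq_eq_abs]; simp
  rw [h]
  apply Real.sqrt_le_sqrt
  exact Finset.single_le_sum (f := fun j => ‖x j‖ ^ 2) (fun j _ => by positivity) (Finset.mem_univ i)

private lemma gaffney_apply_eq_sum (l : EuclideanSpace ℝ (Fin n) →L[ℝ] ℝ)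
    (w : EuclideanSpace ℝ (Fin n)) :
    ∑ i, l (EuclideanSpace.single i 1) * w i = l w := by
  conv_rhs => rw [← (EuclideanSpace.basisFun (Fin n) ℝ).sum_repr w]
  rw [map_sum]
  refine Finset.sum_congr rfl fun i _ => ?_
  rw [EuclideanSpace.basisFun_repr, EuclideanSpace.basisFun_apply, _root_.map_smul]
  simp [mul_comm]

end GaffneyAux

open scoped Topology

/-- Gaffney's theorem, formalized on the complete Riemannian manifold
`ℝⁿ` (Euclidean space with its flat metric and Lebesgue volume measure):
if a `C¹` vector field `X` satisfies `∫ |X| < ∞` and `∫ |div X| < ∞`,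
then `∫ div X = 0`.  Here `div X x` is the trace of the derivative of `X`
at `x`, which is the Riemannian divergence for the Euclidean metric. -/
theorem gaffney_divergence_theorem {n : ℕ}
    (X : EuclideanSpace ℝ (Fin n) → EuclideanSpace ℝ (Fin n))
    (hX : ContDiff ℝ 1 X)
    (div : EuclideanSpace ℝ (Fin n) → ℝ)
    (hdiv : ∀ x, div x = LinearMap.trace ℝ _ (fderiv ℝ X x).toLinearMap)
    (hXint : Integrable (fun x => ‖X x‖) volume)
    (hdivint : Integrable (fun x => |div x|) volume) :
    ∫ x, div x = 0 := by
  -- basic facts about X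
  have hXd : Differentiable ℝ X := hX.differentiable one_ne_zero
  have hXc : Continuous X := hX.continuous
  have hXfc : Continuous (fderiv ℝ X) := hX.continuous_fderiv one_ne_zero
  -- divergence as a sum of coordinate derivatives
  have hdiv' : ∀ x, div x = ∑ i, fderiv ℝ X x (EuclideanSpace.single i 1) i := fun x => by
    rw [hdiv x, gaffney_trace_aux]
  have hdivc : Continuous div := by
    have h : Continuous fun x => ∑ i : Fin n, fderiv ℝ X x (EuclideanSpace.single i 1) i := by
      apply continuous_finset_sum
      intro i _
      exact (EuclideanSpace.proj i).continuous.comp (hXfc.clm_apply continuous_const)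
    exact h.congr fun x => (hdiv' x).symm
  -- coordinate functions
  have hXi : ∀ i : Fin n, Differentiable ℝ (fun y => X y i) := by
    intro i
    simpa [Function.comp_def] using (EuclideanSpace.proj i).differentiable.comp hXd
  have hfXi : ∀ (i : Fin n) (x v : EuclideanSpace ℝ (Fin n)),
      fderiv ℝ (fun y => X y i) x v = fderiv ℝ X x v i := by
    intro i x v
    have h : fderiv ℝ (⇑(EuclideanSpace.proj (𝕜 := ℝ) i) ∘ X) x
        = (EuclideanSpace.proj i).comp (fderiv ℝ X x) :=
      ((EuclideanSpace.proj i).hasFDerivAt.comp x (hXd x).hasFDerivAt).fderiv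
    have h2 : ⇑(EuclideanSpace.proj (𝕜 := ℝ) i) ∘ X = fun y => X y i := rfl
    rw [← h2, h]; rfl
  have hfXic : ∀ i : Fin n, Continuous (fun x => fderiv ℝ (fun y => X y i) x
      (EuclideanSpace.single i 1)) := by
    intro i
    have h : Continuous fun x => fderiv ℝ X x (EuclideanSpace.single i 1) i :=
      (EuclideanSpace.proj i).continuous.comp (hXfc.clm_apply continuous_const)
    exact h.congr fun x => (hfXi i x _).symm
  -- the bump function
  let χ : ContDiffBump (0 : EuclideanSpace ℝ (Fin n)) := ⟨1, 2, one_pos, one_lt_two⟩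
  have hχfc : Continuous (fderiv ℝ (χ : EuclideanSpace ℝ (Fin n) → ℝ)) :=
    (χ.contDiff : ContDiff ℝ 1 _).continuous_fderiv one_ne_zero
  have hχfs : HasCompactSupport (fderiv ℝ (χ : EuclideanSpace ℝ (Fin n) → ℝ)) :=
    χ.hasCompactSupport.fderiv (𝕜 := ℝ)
  obtain ⟨C, hC⟩ := hχfs.exists_bound_of_continuous hχfc
  have hC0 : 0 ≤ C := le_trans (norm_nonneg _) (hC 0)
  -- the cutoffs
  set c : ℕ → ℝ := fun k => ((k : ℝ) + 1)⁻¹ with hc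
  have hck : ∀ k, 0 < c k := fun k => by simp only [hc]; positivity
  set φ : ℕ → EuclideanSpace ℝ (Fin n) → ℝ := fun k x => χ (c k • x) with hφ
  set L : ℕ → EuclideanSpace ℝ (Fin n) →L[ℝ] EuclideanSpace ℝ (Fin n) :=
    fun k => c k • ContinuousLinearMap.id ℝ (EuclideanSpace ℝ (Fin n)) with hL
  have hLapp : ∀ k x, L k x = c k • x := fun k x => rfl
  have hLnorm : ∀ k, ‖L k‖ ≤ c k := by
    intro k
    calc ‖L k‖ ≤ ‖c k‖ * ‖ContinuousLinearMap.id ℝ (EuclideanSpace ℝ (Fin n))‖ := by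
          simp only [hL]; exact ContinuousLinearMap.opNorm_smul_le _ _
      _ ≤ ‖c k‖ * 1 := by gcongr; exact ContinuousLinearMap.norm_id_le
      _ = c k := by rw [mul_one, Real.norm_eq_abs, abs_of_pos (hck k)]
  have hφfd : ∀ k x, HasFDerivAt (φ k)
      ((fderiv ℝ (χ : EuclideanSpace ℝ (Fin n) → ℝ) (c k • x)).comp (L k)) x := by
    intro k x
    have h1 : HasFDerivAt (χ : EuclideanSpace ℝ (Fin n) → ℝ)
        (fderiv ℝ (χ : EuclideanSpace ℝ (Fin n) → ℝ) (c k • x)) (L k x) := by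
      rw [hLapp]
      exact ((χ.contDiff : ContDiff ℝ 1 _).differentiable one_ne_zero _).hasFDerivAt
    exact h1.comp x (L k).hasFDerivAt
  have hφdiff : ∀ k, Differentiable ℝ (φ k) := fun k x => (hφfd k x).differentiableAt
  have hφbound : ∀ k x, ‖fderiv ℝ (φ k) x‖ ≤ C * c k := by
    intro k x
    rw [(hφfd k x).fderiv]
    calc ‖(fderiv ℝ (χ : EuclideanSpace ℝ (Fin n) → ℝ) (c k • x)).comp (L k)‖
        ≤ ‖fderiv ℝ (χ : EuclideanSpace ℝ (Fin n) → ℝ) (c k • x)‖ * ‖L k‖ :=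
          ContinuousLinearMap.opNorm_comp_le _ _
      _ ≤ C * c k := mul_le_mul (hC _) (hLnorm k) (norm_nonneg _) hC0
  have hφcont : ∀ k, Continuous (φ k) := fun k =>
    χ.continuous.comp (continuous_const_smul _)
  have hφ0 : ∀ k x, 0 ≤ φ k x := fun k x => χ.nonneg
  have hφ1 : ∀ k x, φ k x ≤ 1 := fun k x => χ.le_one
  have hφcs : ∀ k, HasCompactSupport (φ k) := by
    intro k
    apply HasCompactSupport.intro
      (isCompact_closedBall (0 : EuclideanSpace ℝ (Fin n)) (2 * ((k : ℝ) + 1)))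
    intro x hx
    apply χ.zero_of_le_dist
    have hxnorm : 2 * ((k : ℝ) + 1) < ‖x‖ := by
      simpa [dist_eq_norm] using hx
    have hr : χ.rOut = 2 := rfl
    rw [hr, dist_eq_norm, sub_zero, norm_smul, Real.norm_eq_abs, abs_of_pos (hck k)]
    simp only [hc]
    rw [le_inv_mul_iff₀ (by positivity)]
    linarith
  have hφfderivc : ∀ k, Continuous (fderiv ℝ (φ k)) := by
    intro k
    have hsm : ContDiff ℝ 1 (φ k) := by
      have h : ContDiff ℝ 1 fun x : EuclideanSpace ℝ (Fin n) => c k • x :=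
        contDiff_const_smul _
      exact (χ.contDiff : ContDiff ℝ 1 _).comp h
    exact hsm.continuous_fderiv one_ne_zero
  -- cutoff is one on large balls
  have hφone : ∀ (x : EuclideanSpace ℝ (Fin n)) (k : ℕ), ‖x‖ ≤ (k : ℝ) + 1 → φ k x = 1 := by
    intro x k hk
    apply χ.one_of_mem_closedBall
    have hr : χ.rIn = 1 := rfl
    rw [Metric.mem_closedBall, hr, dist_eq_norm, sub_zero, norm_smul, Real.norm_eq_abs,
      abs_of_pos (hck k)]
    simp only [hc]
    rw [inv_mul_le_iff₀ (by positivity), mul_one]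
    exact hk
  -- integrability of the key integrands
  have hIb : ∀ (k : ℕ) (i : Fin n),
      Integrable (fun x => fderiv ℝ (φ k) x (EuclideanSpace.single i 1) * X x i) volume := by
    intro k i
    apply Integrable.mono' (hXint.const_mul (C * c k))
    · exact (((hφfderivc k).clm_apply continuous_const).mul
        ((EuclideanSpace.proj i).continuous.comp hXc)).aestronglyMeasurable
    · filter_upwards with x
      rw [Real.norm_eq_abs, abs_mul]
      calc |fderiv ℝ (φ k) x (EuclideanSpace.single i 1)| * |X x i|
          ≤ (‖fderiv ℝ (φ k) x‖ * ‖EuclideanSpace.single i (1:ℝ)‖) * ‖X x‖ := by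
            apply mul_le_mul ((fderiv ℝ (φ k) x).le_opNorm _) (gaffney_abs_coord_le _ i)
              (abs_nonneg _) (by positivity)
        _ ≤ (C * c k) * ‖X x‖ := by
            have h1 : ‖EuclideanSpace.single i (1:ℝ)‖ = 1 := by
              simp [EuclideanSpace.norm_single]
            rw [h1, mul_one]
            exact mul_le_mul_of_nonneg_right (hφbound k x) (norm_nonneg _)
  have hIa : ∀ (k : ℕ) (i : Fin n),
      Integrable (fun x => φ k x * fderiv ℝ (fun y => X y i) x (EuclideanSpace.single i 1))
        volume := fun k i =>
    ((hφcont k).mul (hfXic i)).integrable_of_hasCompactSupport ((hφcs k).mul_right)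
  have hIc : ∀ (k : ℕ) (i : Fin n), Integrable (fun x => φ k x * X x i) volume := fun k i =>
    ((hφcont k).mul ((EuclideanSpace.proj i).continuous.comp
      hXc)).integrable_of_hasCompactSupport ((hφcs k).mul_right)
  -- integration by parts, per k
  have key : ∀ k : ℕ, ∫ x, φ k x * div x = - ∫ x, fderiv ℝ (φ k) x (X x) := by
    intro k
    have hibp : ∀ i : Fin n,
        ∫ x, φ k x * fderiv ℝ (fun y => X y i) x (EuclideanSpace.single i 1)
          = - ∫ x, fderiv ℝ (φ k) x (EuclideanSpace.single i 1) * X x i :=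
      fun i => integral_mul_fderiv_eq_neg_fderiv_mul_of_integrable
        (hIb k i) (hIa k i) (hIc k i) (fun x _ => hφdiff k x) (fun x _ => hXi i x)
    calc ∫ x, φ k x * div x
        = ∫ x, ∑ i, φ k x * fderiv ℝ (fun y => X y i) x (EuclideanSpace.single i 1) := by
          congr 1; funext x
          rw [hdiv' x, Finset.mul_sum]
          exact Finset.sum_congr rfl fun i _ => by rw [hfXi]
      _ = ∑ i, ∫ x, φ k x * fderiv ℝ (fun y => X y i) x (EuclideanSpace.single i 1) :=
          integral_finset_sum _ fun i _ => hIa k i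
      _ = ∑ i, - ∫ x, fderiv ℝ (φ k) x (EuclideanSpace.single i 1) * X x i :=
          Finset.sum_congr rfl fun i _ => hibp i
      _ = - ∑ i, ∫ x, fderiv ℝ (φ k) x (EuclideanSpace.single i 1) * X x i := by
          rw [Finset.sum_neg_distrib]
      _ = - ∫ x, ∑ i, fderiv ℝ (φ k) x (EuclideanSpace.single i 1) * X x i := by
          rw [integral_finset_sum _ fun i _ => hIb k i]
      _ = - ∫ x, fderiv ℝ (φ k) x (X x) := by
          congr 1; apply integral_congr_ae; filter_upwards with x
          exact gaffney_apply_eq_sum _ _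
  -- limit of the left-hand side
  have h1 : Tendsto (fun k => ∫ x, φ k x * div x) atTop (𝓝 (∫ x, div x)) := by
    apply tendsto_integral_of_dominated_convergence (fun x => |div x|)
    · exact fun k => ((hφcont k).mul hdivc).aestronglyMeasurable
    · exact hdivint
    · intro k
      filter_upwards with x
      rw [Real.norm_eq_abs, abs_mul]
      calc |φ k x| * |div x| ≤ 1 * |div x| := by
            apply mul_le_mul_of_nonneg_right _ (abs_nonneg _)
            rw [abs_of_nonneg (hφ0 k x)]; exact hφ1 k x
        _ = |div x| := one_mul _
    · filter_upwards with x
      have hev : ∀ᶠ k : ℕ in atTop, φ k x * div x = div x := by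
        filter_upwards [eventually_ge_atTop ⌈‖x‖⌉₊] with k hk
        rw [hφone x k, one_mul]
        calc ‖x‖ ≤ (⌈‖x‖⌉₊ : ℝ) := Nat.le_ceil _
          _ ≤ (k : ℝ) := by exact_mod_cast hk
          _ ≤ (k : ℝ) + 1 := by linarith
      exact tendsto_const_nhds.congr' (hev.mono fun k hk => hk.symm)
  -- limit of the right-hand side
  have h2 : Tendsto (fun k => ∫ x, fderiv ℝ (φ k) x (X x)) atTop (𝓝 0) := by
    apply squeeze_zero_norm (a := fun k => c k * (C * ∫ x, ‖X x‖))
    · intro k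
      have hint : Integrable (fun x => (C * c k) * ‖X x‖) volume := hXint.const_mul _
      calc ‖∫ x, fderiv ℝ (φ k) x (X x)‖ ≤ ∫ x, ‖fderiv ℝ (φ k) x (X x)‖ :=
            norm_integral_le_integral_norm _
        _ ≤ ∫ x, (C * c k) * ‖X x‖ := by
            apply integral_mono_of_nonneg ?_ hint ?_
            · filter_upwards with x; exact norm_nonneg _
            · filter_upwards with x
              calc ‖fderiv ℝ (φ k) x (X x)‖ ≤ ‖fderiv ℝ (φ k) x‖ * ‖X x‖ :=
                    (fderiv ℝ (φ k) x).le_opNorm _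
                _ ≤ (C * c k) * ‖X x‖ :=
                    mul_le_mul_of_nonneg_right (hφbound k x) (norm_nonneg _)
        _ = (C * c k) * ∫ x, ‖X x‖ := integral_const_mul _ _
        _ = c k * (C * ∫ x, ‖X x‖) := by ring
    · have hc0 : Tendsto c atTop (𝓝 0) := by
        have h := tendsto_one_div_add_atTop_nhds_zero_nat (𝕜 := ℝ)
        simpa [hc, one_div] using h
      simpa using hc0.mul_const (C * ∫ x, ‖X x‖)
  -- conclude
  have h1' : Tendsto (fun k => - ∫ x, fderiv ℝ (φ k) x (X x)) atTop (𝓝 (∫ x, div x)) := by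
    apply h1.congr
    intro k; exact key k
  have h2' : Tendsto (fun k => - ∫ x, fderiv ℝ (φ k) x (X x)) atTop (𝓝 0) := by
    simpa using h2.neg
  exact tendsto_nhds_unique h1' h2'
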